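/- There exist constants c, C > 0 such that for all N ≥ 2, the sum over j ∈ {−1,0,1,2,...} of 2^{2 max(0,j)} · max_{m ∈ D_j} (μ^{N,sym}_{j,m})² is at most C (log N)/N², where D_{-1} = {0} and D_j = {0,...,2^j −1}. -/

import Mathlib

open MeasureTheory Finset

/-- Base-2 radical inverse: for `n = ∑ nᵢ 2ⁱ`, `radInv n = ∑ nᵢ 2^{-i-1}`. -/
noncomputable def radInv (n : ℕ) : ℝ :=
  ∑ i ∈ Finset.range n, if n.testBit i then (1:ℝ)/2^(i+1) else 0

/-- L∞-normalized Haar function supported on `I_{j,m} = [m/2^j, (m+1)/2^j)`. -/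
noncomputable def haarFn (j m : ℕ) (t : ℝ) : ℝ :=
  if (m:ℝ)/2^j ≤ t ∧ t < (m:ℝ)/2^j + 1/2^(j+1) then 1
  else if (m:ℝ)/2^j + 1/2^(j+1) ≤ t ∧ t < ((m:ℝ)+1)/2^j then -1
  else 0

/-- Local discrepancy of the first `N` terms of the sequence `x`. -/
noncomputable def disc (x : ℕ → ℝ) (N : ℕ) (t : ℝ) : ℝ :=
  (∑ n ∈ Finset.range N, Set.indicator (Set.Ico (0:ℝ) t) (fun _ => (1:ℝ)) (x n)) / N - t

/-- Symmetrized van der Corput sequence: `z_{2m} = φ(m)`, `z_{2m+1} = 1 - φ(m)`. -/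
noncomputable def vdcSym (n : ℕ) : ℝ :=
  if n % 2 = 0 then radInv (n / 2) else 1 - radInv (n / 2)

/-- Haar coefficient `μ_{j,m}` of the local discrepancy of the first `N` terms of `x`. -/
noncomputable def haarCoeff (x : ℕ → ℝ) (N j m : ℕ) : ℝ :=
  ∫ t in (0:ℝ)..1, disc x N t * haarFn j m t

lemma radInv_eq_sum (n P : ℕ) (h : n ≤ P) :
    radInv n = ∑ i ∈ Finset.range P, if n.testBit i then (1:ℝ)/2^(i+1) else 0 := by
  unfold radInv
  apply Finset.sum_subset (Finset.range_subset_range.2 h)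
  intro i hi hni
  simp only [Finset.mem_range, not_lt] at hni
  rw [Nat.testBit_eq_false_of_lt (lt_of_le_of_lt hni (Nat.lt_two_pow_self (n := i)))]
  simp

lemma radInv_zero : radInv 0 = 0 := by simp [radInv]

lemma radInv_two_mul (k : ℕ) : radInv (2 * k) = radInv k / 2 := by
  rw [radInv_eq_sum (2*k) (2*k+1) (by omega), radInv_eq_sum k (2*k) (by omega)]
  rw [Finset.sum_range_succ']
  have h0 : (2*k).testBit 0 = false := by simp [Nat.testBit_zero]
  rw [h0]
  simp only [Bool.false_eq_true, if_false, add_zero]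
  rw [Finset.sum_div]
  apply Finset.sum_congr rfl
  intro i _
  rw [Nat.testBit_succ, Nat.mul_div_cancel_left k (by norm_num)]
  by_cases h : k.testBit i <;> simp [h, pow_succ] <;> ring

lemma radInv_two_mul_add_one (k : ℕ) : radInv (2 * k + 1) = 1/2 + radInv k / 2 := by
  rw [radInv_eq_sum (2*k+1) (2*k+1+1) (by omega), radInv_eq_sum k (2*k+1) (by omega)]
  rw [Finset.sum_range_succ']
  have h0 : (2*k+1).testBit 0 = true := by
    have : 2*k+1 = 2*k+1 := rfl
    simp [Nat.testBit_zero, Nat.add_mul_mod_self_left, Nat.mul_add_mod]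
  rw [h0]
  simp only [if_true]
  have hdiv : (2*k+1)/2 = k := by omega
  have hs : (∑ x ∈ Finset.range (2*k+1), if (2*k+1).testBit (x+1) then (1:ℝ)/2^(x+1+1) else 0)
      = (∑ x ∈ Finset.range (2*k+1), if k.testBit x then (1:ℝ)/2^(x+1) else 0) / 2 := by
    rw [Finset.sum_div]
    apply Finset.sum_congr rfl
    intro i _
    rw [Nat.testBit_succ, hdiv]
    by_cases h : k.testBit i <;> simp [h, pow_succ] <;> ring
  rw [hs]
  norm_num [add_comm]

lemma radInv_nonneg (n : ℕ) : 0 ≤ radInv n := by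
  unfold radInv
  apply Finset.sum_nonneg
  intro i _
  split <;> positivity

lemma radInv_lt_one (n : ℕ) : radInv n < 1 := by
  have h : radInv n ≤ ∑ i ∈ Finset.range n, (1:ℝ)/2^(i+1) := by
    apply Finset.sum_le_sum
    intro i _
    split
    · exact le_refl _
    · positivity
  have h2 : ∑ i ∈ Finset.range n, (1:ℝ)/2^(i+1) = 1 - (1/2)^n := by
    have : ∀ i, (1:ℝ)/2^(i+1) = (1/2) * (1/2)^i := by
      intro i; rw [pow_succ, div_pow, one_pow]; ring
    simp only [this]
    rw [← Finset.mul_sum, geom_sum_eq (by norm_num)]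
    ring
  have h3 : (0:ℝ) < (1/2)^n := by positivity
  linarith

/-! ### The hat (tent) function -/

noncomputable def lam (u : ℝ) : ℝ := max 0 (min u (2 - u))

lemma lam_nonneg (u : ℝ) : 0 ≤ lam u := le_max_left _ _

lemma lam_le_one (u : ℝ) : lam u ≤ 1 := by
  unfold lam
  rw [max_le_iff]
  refine ⟨by norm_num, ?_⟩
  rcases le_total u 1 with h | h
  · exact le_trans (min_le_left _ _) h
  · exact le_trans (min_le_right _ _) (by linarith)

lemma lam_of_nonpos (u : ℝ) (h : u ≤ 0) : lam u = 0 :=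
  max_eq_left (le_trans (min_le_left _ _) h)

lemma lam_of_ge_two (u : ℝ) (h : 2 ≤ u) : lam u = 0 :=
  max_eq_left (le_trans (min_le_right _ _) (by linarith))

lemma lam_left (u : ℝ) (h0 : 0 ≤ u) (h1 : u ≤ 1) : lam u = u := by
  unfold lam
  rw [min_eq_left (by linarith), max_eq_right h0]

lemma lam_right (u : ℝ) (h1 : 1 ≤ u) (h2 : u ≤ 2) : lam u = 2 - u := by
  unfold lam
  rw [min_eq_right (by linarith), max_eq_right (by linarith)]

noncomputable def tent (j m : ℕ) (x : ℝ) : ℝ := (1/2^(j+1)) * lam (2^(j+1)*x - 2*m)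

lemma tent_nonneg (j m : ℕ) (x : ℝ) : 0 ≤ tent j m x := by
  unfold tent
  have := lam_nonneg (2^(j+1)*x - 2*m)
  positivity

lemma tent_le (j m : ℕ) (x : ℝ) : tent j m x ≤ 1/2^(j+1) := by
  unfold tent
  have h := lam_le_one (2^(j+1)*x - 2*m)
  have h2 : (0:ℝ) < 1/2^(j+1) := by positivity
  nlinarith

/-! ### Grid sums of the tent function -/

lemma sum_lam_grid (j m : ℕ) (hm : m < 2^j) (δ' : ℝ) (h0 : 0 ≤ δ') (h1 : δ' < 1) :
    ∑ t ∈ Finset.range (2^(j+1)), lam ((t:ℝ) - 2*m + δ') = 1 := by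
  have hQ : 2^(j+1) = 2*2^j := by rw [pow_succ]; ring
  have hsub : ({2*m, 2*m+1} : Finset ℕ) ⊆ Finset.range (2^(j+1)) := by
    intro t ht
    simp only [Finset.mem_insert, Finset.mem_singleton] at ht
    simp only [Finset.mem_range]
    omega
  rw [← Finset.sum_subset hsub]
  · rw [Finset.sum_pair (by omega : 2*m ≠ 2*m+1)]
    have c1 : ((2*m : ℕ) : ℝ) - 2*m + δ' = δ' := by push_cast; ring
    have c2 : ((2*m+1 : ℕ) : ℝ) - 2*m + δ' = 1 + δ' := by push_cast; ring
    rw [c1, c2, lam_left δ' h0 (by linarith), lam_right (1+δ') (by linarith) (by linarith)]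
    ring
  · intro t ht hnt
    simp only [Finset.mem_insert, Finset.mem_singleton] at hnt
    push_neg at hnt
    rcases lt_or_gt_of_ne hnt.1 with h | h
    · apply lam_of_nonpos
      have : (t:ℝ) + 1 ≤ 2*m := by exact_mod_cast h
      linarith
    · apply lam_of_ge_two
      have : 2*(m:ℝ) + 2 ≤ t := by exact_mod_cast (by omega : 2*m+2 ≤ t)
      linarith

lemma sum_lam_grid_mirror (j m : ℕ) (hm : m < 2^j) (δ' : ℝ) (h0 : 0 ≤ δ') (h1 : δ' < 1) :
    ∑ t ∈ Finset.range (2^(j+1)), lam ((2^(j+1) : ℝ) - (t:ℝ) - δ' - 2*m) = 1 := by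
  have hQ : 2^(j+1) = 2*2^j := by rw [pow_succ]; ring
  have hm2 : 2*m+2 ≤ 2^(j+1) := by omega
  set t1 := 2^(j+1) - (2*m+1) with ht1
  set t2 := 2^(j+1) - (2*m+2) with ht2
  have hne : t1 ≠ t2 := by omega
  have hsub : ({t1, t2} : Finset ℕ) ⊆ Finset.range (2^(j+1)) := by
    intro t ht
    simp only [Finset.mem_insert, Finset.mem_singleton] at ht
    simp only [Finset.mem_range]
    omega
  have hcast : ((2:ℝ))^(j+1) = ((2^(j+1) : ℕ) : ℝ) := by push_cast; ring
  rw [← Finset.sum_subset hsub]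
  · rw [Finset.sum_pair hne]
    have c1 : ((2:ℝ))^(j+1) - (t1:ℝ) - δ' - 2*m = 1 - δ' := by
      rw [hcast]
      have : ((t1:ℕ):ℝ) = ((2^(j+1):ℕ):ℝ) - (2*m+1 : ℕ) := by
        rw [ht1]
        push_cast [Nat.cast_sub (by omega : 2*m+1 ≤ 2^(j+1))]
        ring
      rw [this]
      push_cast
      ring
    have c2 : ((2:ℝ))^(j+1) - (t2:ℝ) - δ' - 2*m = 2 - δ' := by
      rw [hcast]
      have : ((t2:ℕ):ℝ) = ((2^(j+1):ℕ):ℝ) - (2*m+2 : ℕ) := by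
        rw [ht2]
        push_cast [Nat.cast_sub hm2]
        ring
      rw [this]
      push_cast
      ring
    rw [c1, c2, lam_left (1-δ') (by linarith) (by linarith),
        lam_right (2-δ') (by linarith) (by linarith)]
    ring
  · intro t ht hnt
    simp only [Finset.mem_insert, Finset.mem_singleton] at hnt
    push_neg at hnt
    simp only [Finset.mem_range] at ht
    rcases lt_or_gt_of_ne hnt.1 with h | h
    · -- t < t1, i.e. t ≤ t1 - 1 = 2^(j+1) - 2m - 2 ... then arg ≥ 2
      apply lam_of_ge_two
      have h3 : t + 2*m + 2 + 1 ≤ 2^(j+1) := by omega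
      have : (t:ℝ) + 2*m + 3 ≤ (2:ℝ)^(j+1) := by
        rw [hcast]; exact_mod_cast h3
      linarith
    · -- t > t1, i.e. t ≥ 2^(j+1) - 2m : arg ≤ -δ' ≤ 0
      apply lam_of_nonpos
      have h3 : 2^(j+1) ≤ t + 2*m := by omega
      have : (2:ℝ)^(j+1) ≤ (t:ℝ) + 2*m := by
        rw [hcast]; exact_mod_cast h3
      linarith

noncomputable def Gfun (j m : ℕ) (x : ℝ) : ℝ := tent j m x + tent j m (1 - x)

lemma Gfun_nonneg (j m : ℕ) (x : ℝ) : 0 ≤ Gfun j m x :=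
  add_nonneg (tent_nonneg _ _ _) (tent_nonneg _ _ _)

lemma sum_tent_grid (j m : ℕ) (hm : m < 2^j) (δ : ℝ) (h0 : 0 ≤ δ) (h1 : δ < 1/2^(j+1)) :
    ∑ t ∈ Finset.range (2^(j+1)), Gfun j m ((t:ℝ)/2^(j+1) + δ) = 1/2^j := by
  have hQ : (0:ℝ) < 2^(j+1) := by positivity
  set δ' : ℝ := 2^(j+1) * δ with hδ'
  have h0' : 0 ≤ δ' := by positivity
  have h1' : δ' < 1 := by
    rw [hδ']
    calc (2:ℝ)^(j+1) * δ < 2^(j+1) * (1/2^(j+1)) := by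
          apply mul_lt_mul_of_pos_left h1 hQ
      _ = 1 := by field_simp
  unfold Gfun tent
  rw [Finset.sum_add_distrib, ← Finset.mul_sum, ← Finset.mul_sum]
  have e1 : ∀ t ∈ Finset.range (2^(j+1)),
      lam (2^(j+1) * ((t:ℝ)/2^(j+1) + δ) - 2*m) = lam ((t:ℝ) - 2*m + δ') := by
    intro t _
    congr 1
    field_simp
    ring
  have e2 : ∀ t ∈ Finset.range (2^(j+1)),
      lam (2^(j+1) * (1 - ((t:ℝ)/2^(j+1) + δ)) - 2*m)
        = lam ((2^(j+1) : ℝ) - (t:ℝ) - δ' - 2*m) := by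
    intro t _
    congr 1
    field_simp
    ring
  rw [Finset.sum_congr rfl e1, Finset.sum_congr rfl e2,
      sum_lam_grid j m hm δ' h0' h1', sum_lam_grid_mirror j m hm δ' h0' h1']
  rw [pow_succ]
  ring

/-! ### Structure of the van der Corput sequence -/

lemma radInv_block (P : ℕ) : ∀ A s : ℕ, s < 2^P →
    radInv (2^P * A + s) = radInv s + radInv A / 2^P := by
  induction P with
  | zero =>
    intro A s hs
    interval_cases s
    simp [radInv_zero]
  | succ P ih =>
    intro A s hs
    rcases Nat.even_or_odd s with ⟨s', rfl⟩ | ⟨s', rfl⟩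
    · have h1 : 2^(P+1) * A + (s' + s') = 2 * (2^P * A + s') := by ring
      rw [h1, radInv_two_mul, ih A s' (by omega), ← two_mul s', radInv_two_mul]
      rw [pow_succ]
      ring
    · have h1 : 2^(P+1) * A + (2*s' + 1) = 2 * (2^P * A + s') + 1 := by ring
      rw [h1, radInv_two_mul_add_one, ih A s' (by omega), radInv_two_mul_add_one]
      rw [pow_succ]
      ring

lemma sum_range_two_mul (n : ℕ) (f : ℕ → ℝ) :
    ∑ i ∈ Finset.range (2*n), f i = ∑ k ∈ Finset.range n, (f (2*k) + f (2*k+1)) := by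
  induction n with
  | zero => simp
  | succ n ih =>
    have : 2*(n+1) = (2*n) + 1 + 1 := by ring
    rw [this, Finset.sum_range_succ, Finset.sum_range_succ, ih, Finset.sum_range_succ]
    ring

lemma sum_radInv_reindex (P : ℕ) : ∀ F : ℝ → ℝ,
    ∑ s ∈ Finset.range (2^P), F (radInv s) = ∑ t ∈ Finset.range (2^P), F ((t:ℝ)/2^P) := by
  induction P with
  | zero => intro F; simp [radInv_zero]
  | succ P ih =>
    intro F
    have h2 : 2^(P+1) = 2*2^P := by rw [pow_succ]; ring
    rw [h2, sum_range_two_mul]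
    have e1 : ∀ k ∈ Finset.range (2^P),
        F (radInv (2*k)) + F (radInv (2*k+1))
          = F (radInv k / 2) + F (1/2 + radInv k / 2) := by
      intro k _
      rw [radInv_two_mul, radInv_two_mul_add_one]
    rw [Finset.sum_congr rfl e1]
    rw [ih (fun x => F (x/2) + F (1/2 + x/2))]
    have h3 : 2*2^P = 2^P + 2^P := by ring
    rw [h3, Finset.sum_range_add, Finset.sum_add_distrib]
    have hp : (0:ℝ) < 2^P := by positivity
    have hp1 : (0:ℝ) < 2^(P+1) := by positivity
    congr 1
    · apply Finset.sum_congr rfl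
      intro t _
      have c1 : ((t:ℝ)/2^P)/2 = (t:ℝ)/2^(P+1) := by
        rw [div_div, ← pow_succ]
      rw [c1]
    · apply Finset.sum_congr rfl
      intro t _
      have c2 : 1/2 + ((t:ℝ)/2^P)/2 = ((2^P + t : ℕ):ℝ)/2^(P+1) := by
        push_cast
        rw [pow_succ]
        field_simp
      rw [c2]

lemma vdcSym_even (k : ℕ) : vdcSym (2*k) = radInv k := by
  simp [vdcSym, Nat.mul_mod_right, Nat.mul_div_cancel_left k (by norm_num : 0 < 2)]

lemma vdcSym_odd (k : ℕ) : vdcSym (2*k+1) = 1 - radInv k := by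
  have h1 : (2*k+1) % 2 = 1 := by omega
  have h2 : (2*k+1) / 2 = k := by omega
  simp [vdcSym, h1, h2]

lemma sum_Gfun_block (j m : ℕ) (hm : m < 2^j) (A : ℕ) :
    ∑ s ∈ Finset.range (2^(j+1)), Gfun j m (radInv (2^(j+1) * A + s)) = 1/2^j := by
  set δ : ℝ := radInv A / 2^(j+1) with hδ
  have h0 : 0 ≤ δ := by
    rw [hδ]; exact div_nonneg (radInv_nonneg A) (by positivity)
  have h1 : δ < 1/2^(j+1) := by
    rw [hδ, div_lt_div_iff₀ (by positivity) (by positivity)]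
    have := radInv_lt_one A
    nlinarith [pow_pos (by norm_num : (0:ℝ) < 2) (j+1)]
  have e : ∀ s ∈ Finset.range (2^(j+1)),
      Gfun j m (radInv (2^(j+1) * A + s)) = (fun x => Gfun j m (x + δ)) (radInv s) := by
    intro s hs
    simp only [Finset.mem_range] at hs
    rw [radInv_block (j+1) A s hs]
  rw [Finset.sum_congr rfl e, sum_radInv_reindex (j+1) (fun x => Gfun j m (x + δ))]
  exact sum_tent_grid j m hm δ h0 h1

lemma sum_Gfun_blocks (j m : ℕ) (hm : m < 2^j) (A : ℕ) :
    ∑ k ∈ Finset.range (2^(j+1) * A), Gfun j m (radInv k) = A/2^j := by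
  induction A with
  | zero => simp
  | succ A ih =>
    have h1 : 2^(j+1) * (A+1) = 2^(j+1) * A + 2^(j+1) := by ring
    rw [h1, Finset.sum_range_add, ih]
    have e : ∀ s ∈ Finset.range (2^(j+1)),
        Gfun j m (radInv (2^(j+1) * A + s)) = Gfun j m (radInv (2^(j+1) * A + s)) := fun _ _ => rfl
    rw [sum_Gfun_block j m hm A]
    push_cast
    ring

lemma tent_sum_bound (N j m : ℕ) (hm : m < 2^j) :
    |(∑ n ∈ Finset.range N, tent j m (vdcSym n)) - N * (1/4^(j+1))| ≤ 2/2^j := by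
  set q : ℝ := 2^j with hq'
  have hq : (0:ℝ) < q := by positivity
  have hq1 : (1:ℝ) ≤ q := one_le_pow₀ (by norm_num)
  set M := N / 2 with hM'
  set r := N % 2 with hr'
  have hN : N = 2*M + r := by omega
  have hrle : r ≤ 1 := by omega
  set A := M / 2^(j+1) with hA'
  set B := M % 2^(j+1) with hB'
  have hMAB : M = 2^(j+1)*A + B := by
    rw [hA', hB']
    exact (Nat.div_add_mod M (2^(j+1))).symm
  have hBle : B ≤ 2^(j+1) := le_of_lt (Nat.mod_lt _ (by positivity))
  -- the paired part
  have hpair : ∑ n ∈ Finset.range (2*M), tent j m (vdcSym n)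
      = ∑ k ∈ Finset.range M, Gfun j m (radInv k) := by
    rw [sum_range_two_mul]
    apply Finset.sum_congr rfl
    intro k _
    rw [vdcSym_even, vdcSym_odd]
    rfl
  -- split into blocks and partial block
  set E := ∑ s ∈ Finset.range B, Gfun j m (radInv (2^(j+1)*A + s)) with hE'
  have hsplit : ∑ k ∈ Finset.range M, Gfun j m (radInv k) = A/q + E := by
    rw [hMAB, Finset.sum_range_add, sum_Gfun_blocks j m hm A]
  have hE0 : 0 ≤ E := Finset.sum_nonneg (fun s _ => Gfun_nonneg _ _ _)
  have hE1 : E ≤ 1/q := by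
    have : E ≤ ∑ s ∈ Finset.range (2^(j+1)), Gfun j m (radInv (2^(j+1)*A + s)) := by
      apply Finset.sum_le_sum_of_subset_of_nonneg (Finset.range_subset_range.2 hBle)
      intro s _ _
      exact Gfun_nonneg _ _ _
    rw [sum_Gfun_block j m hm A] at this
    exact this
  -- useful real identities
  have h2q : ((2:ℝ))^(j+1) = 2*q := by rw [pow_succ]; ring
  have h4q : ((4:ℝ))^(j+1) = 4*q^2 := by
    have l1 : ((4:ℝ))^(j+1) = 2^(2*(j+1)) := by
      rw [show (4:ℝ) = 2^2 by norm_num, ← pow_mul]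
    have l2 : (4:ℝ)*q^2 = 2^(2*(j+1)) := by
      rw [hq', ← pow_mul, show (4:ℝ) = 2^2 by norm_num, ← pow_add]
      congr 1
      ring
    rw [l1, l2]
  have hBr : ((B:ℝ)) ≤ 2*q := by
    have : ((B:ℝ)) ≤ ((2^(j+1) : ℕ) : ℝ) := by exact_mod_cast hBle
    calc ((B:ℝ)) ≤ ((2^(j+1):ℕ):ℝ) := this
      _ = 2*q := by push_cast; rw [h2q]
  have hrR : ((r:ℝ)) ≤ 1 := by exact_mod_cast hrle
  have hr0 : (0:ℝ) ≤ r := by positivity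
  have hB0 : (0:ℝ) ≤ B := by positivity
  -- the N-part
  have hcastN : ((N:ℝ)) = 2*(2*q*A + B) + r := by
    rw [hN, hMAB]
    push_cast
    rw [h2q]
  -- total sum
  have htotal : ∑ n ∈ Finset.range N, tent j m (vdcSym n)
      = A/q + E + (if r = 1 then tent j m (vdcSym (2*M)) else 0) := by
    rcases (by omega : r = 0 ∨ r = 1) with h | h
    · rw [if_neg (by omega : ¬ r = 1)]
      have hNM : N = 2*M := by omega
      rw [hNM, hpair, hsplit, add_zero]
    · rw [if_pos h]
      have hNM : N = 2*M + 1 := by omega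
      rw [hNM, Finset.sum_range_succ, hpair, hsplit]
  set Rt := (if r = 1 then tent j m (vdcSym (2*M)) else 0) with hRt'
  have hRt0 : 0 ≤ Rt := by
    rw [hRt']
    split
    · exact tent_nonneg _ _ _
    · exact le_refl _
  have hRt1 : Rt ≤ 1/(2*q) := by
    rw [hRt']
    split
    · calc tent j m (vdcSym (2*M)) ≤ 1/2^(j+1) := tent_le _ _ _
        _ = 1/(2*q) := by rw [h2q]
    · positivity
  rw [htotal, hcastN, h4q]
  have hsimp : A/q + E + Rt - (2*(2*q*(A:ℝ) + B) + r) * (1/(4*q^2))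
      = E + Rt - (2*B + r)/(4*q^2) := by
    field_simp
    ring
  rw [hsimp]
  have hX0 : (0:ℝ) ≤ (2*(B:ℝ) + r)/(4*q^2) := by positivity
  have hX2 : (2*(B:ℝ) + r)/(4*q^2) ≤ 2/q := by
    rw [div_le_div_iff₀ (by positivity) hq]
    nlinarith
  have h12 : 1/(2*q) ≤ 1/q := by
    apply one_div_le_one_div_of_le hq
    linarith
  have h2d : 2/q = 2*(1/q) := by ring
  rw [abs_le]
  constructor
  · linarith
  · linarith

/-! ### Tail: tent vanishes at dyadic rationals of fine enough scale -/

lemma tent_int (j m : ℕ) (K : ℤ) : tent j m ((K:ℝ)/2^j) = 0 := by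
  unfold tent
  have hq : (0:ℝ) < 2^j := by positivity
  have harg : (2:ℝ)^(j+1)*((K:ℝ)/2^j) - 2*m = 2*K - 2*m := by
    rw [pow_succ]
    field_simp
  rw [harg]
  rcases le_or_gt K m with h | h
  · have h2 : (K:ℝ) ≤ m := by exact_mod_cast h
    rw [lam_of_nonpos _ (by linarith), mul_zero]
  · have h2 : (m:ℝ) + 1 ≤ K := by exact_mod_cast h
    rw [lam_of_ge_two _ (by linarith), mul_zero]

lemma radInv_dyadic (P : ℕ) : ∀ k : ℕ, k < 2^P → ∃ K : ℤ, radInv k = (K:ℝ)/2^P := by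
  induction P with
  | zero =>
    intro k hk
    interval_cases k
    exact ⟨0, by simp [radInv_zero]⟩
  | succ P ih =>
    intro k hk
    rcases Nat.even_or_odd k with ⟨k', rfl⟩ | ⟨k', rfl⟩
    · obtain ⟨K, hK⟩ := ih k' (by omega)
      refine ⟨K, ?_⟩
      rw [← two_mul, radInv_two_mul, hK, pow_succ]
      field_simp
    · obtain ⟨K, hK⟩ := ih k' (by omega)
      refine ⟨2^P + K, ?_⟩
      rw [radInv_two_mul_add_one, hK, pow_succ]
      push_cast
      field_simp

lemma tent_vdcSym_eq_zero (j m n : ℕ) (h : n/2 < 2^j) : tent j m (vdcSym n) = 0 := by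
  obtain ⟨K, hK⟩ := radInv_dyadic j (n/2) h
  unfold vdcSym
  split
  · rw [hK]; exact tent_int j m K
  · rw [hK]
    have : 1 - (K:ℝ)/2^j = ((2^j - K : ℤ):ℝ)/2^j := by
      push_cast
      field_simp
    rw [this]
    exact tent_int j m _

lemma tent_sum_exact (N j m : ℕ) (hN : N ≤ 2^j) :
    ∑ n ∈ Finset.range N, tent j m (vdcSym n) = 0 := by
  apply Finset.sum_eq_zero
  intro n hn
  simp only [Finset.mem_range] at hn
  exact tent_vdcSym_eq_zero j m n (by omega)

/-! ### The j = -1 part -/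

lemma vdcSym_nonneg (n : ℕ) : 0 ≤ vdcSym n := by
  unfold vdcSym
  split
  · exact radInv_nonneg _
  · have := radInv_lt_one (n/2); linarith

lemma vdcSym_le_one (n : ℕ) : vdcSym n ≤ 1 := by
  unfold vdcSym
  split
  · exact le_of_lt (radInv_lt_one _)
  · have := radInv_nonneg (n/2); linarith

lemma one_sub_sum_bound (N : ℕ) :
    |(∑ n ∈ Finset.range N, (1 - vdcSym n)) - N/2| ≤ 1/2 := by
  set M := N / 2 with hM'
  set r := N % 2 with hr'
  have hN : N = 2*M + r := by omega
  have hrle : r ≤ 1 := by omega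
  have hpair : ∑ n ∈ Finset.range (2*M), (1 - vdcSym n) = M := by
    rw [sum_range_two_mul]
    have e : ∀ k ∈ Finset.range M, (1 - vdcSym (2*k)) + (1 - vdcSym (2*k+1)) = 1 := by
      intro k _
      rw [vdcSym_even, vdcSym_odd]
      ring
    rw [Finset.sum_congr rfl e]
    simp
  have h0 := radInv_nonneg M
  have h1 := radInv_lt_one M
  rcases (by omega : r = 0 ∨ r = 1) with h | h
  · have hNM : N = 2*M := by omega
    rw [hNM, hpair]
    push_cast
    rw [abs_le]
    constructor <;> nlinarith
  · have hNM : N = 2*M + 1 := by omega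
    rw [hNM, Finset.sum_range_succ, hpair, vdcSym_even]
    push_cast
    rw [abs_le]
    constructor <;> nlinarith

/-! ### Integration lemmas -/

lemma monotone_ind (z : ℝ) : Monotone (fun t : ℝ => if z < t then (1:ℝ) else 0) := by
  intro s t hst
  dsimp only
  by_cases h : z < s
  · rw [if_pos h, if_pos (lt_of_lt_of_le h hst)]
  · rw [if_neg h]
    split <;> norm_num

lemma ind_eq (z : ℝ) (hz : 0 ≤ z) (t : ℝ) :
    Set.indicator (Set.Ico (0:ℝ) t) (fun _ => (1:ℝ)) z = if z < t then 1 else 0 := by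
  simp [Set.indicator_apply, Set.mem_Ico, hz]

lemma integral_ind (z u v : ℝ) (huv : u ≤ v) :
    ∫ t in u..v, (if z < t then (1:ℝ) else 0) = v - max u (min v z) := by
  set c := max u (min v z) with hc
  have huc : u ≤ c := le_max_left _ _
  have hcv : c ≤ v := max_le huv (min_le_left _ _)
  have hint : ∀ p q : ℝ, IntervalIntegrable (fun t => if z < t then (1:ℝ) else 0) volume p q :=
    fun p q => (monotone_ind z).intervalIntegrable
  have hsplit := intervalIntegral.integral_add_adjacent_intervals (hint u c) (hint c v)
  have h1 : ∫ t in u..c, (if z < t then (1:ℝ) else 0) = 0 := by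
    rcases le_or_gt (min v z) u with h | h
    · rw [hc, max_eq_left h, intervalIntegral.integral_same]
    · have hcz : c ≤ z := by
        rw [hc, max_eq_right h.le]
        exact min_le_right _ _
      rw [intervalIntegral.integral_congr (g := fun _ => (0:ℝ)) ?_,
        intervalIntegral.integral_zero]
      intro t ht
      rw [Set.uIcc_of_le huc] at ht
      have : ¬ (z < t) := not_lt.2 (le_trans ht.2 hcz)
      simp [this]
  have h2 : ∫ t in c..v, (if z < t then (1:ℝ) else 0) = v - c := by
    rcases le_or_gt z v with h | h
    · have hzc : z ≤ c := by
        rw [hc, min_eq_right h]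
        exact le_max_right _ _
      rw [intervalIntegral.integral_of_le hcv,
        setIntegral_congr_fun measurableSet_Ioc (g := fun _ => (1:ℝ)) ?_]
      · rw [setIntegral_const, Real.volume_real_Ioc_of_le hcv, smul_eq_mul, mul_one]
      · intro t ht
        have : z < t := lt_of_le_of_lt hzc ht.1
        simp [this]
    · have hcv' : c = v := by
        rw [hc, min_eq_left h.le, max_eq_right huv]
      rw [hcv', intervalIntegral.integral_same]
      ring
  rw [← hsplit, h1, h2]
  ring

lemma disc_eq (N : ℕ) (t : ℝ) :
    disc vdcSym N t
      = (∑ n ∈ Finset.range N, (if vdcSym n < t then (1:ℝ) else 0))/N - t := by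
  unfold disc
  congr 2
  apply Finset.sum_congr rfl
  intro n _
  exact ind_eq _ (vdcSym_nonneg n) t

lemma sum_ind_intervalIntegrable (N : ℕ) (u v : ℝ) :
    IntervalIntegrable
      (fun t => (∑ n ∈ Finset.range N, (if vdcSym n < t then (1:ℝ) else 0))/N) volume u v := by
  apply IntervalIntegrable.div_const
  have hmono : Monotone (fun t => ∑ n ∈ Finset.range N, (if vdcSym n < t then (1:ℝ) else 0)) :=
    fun s t hst => Finset.sum_le_sum (fun n _ => monotone_ind (vdcSym n) hst)
  exact hmono.intervalIntegrable

lemma disc_intervalIntegrable (N : ℕ) (u v : ℝ) :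
    IntervalIntegrable (disc vdcSym N) volume u v := by
  have he : disc vdcSym N
      = fun t => (∑ n ∈ Finset.range N, (if vdcSym n < t then (1:ℝ) else 0))/N - t :=
    funext (disc_eq N)
  rw [he]
  exact (sum_ind_intervalIntegrable N u v).sub (continuous_id'.intervalIntegrable _ _)

lemma integral_disc (N : ℕ) (u v : ℝ) (huv : u ≤ v) :
    ∫ t in u..v, disc vdcSym N t
      = (∑ n ∈ Finset.range N, (v - max u (min v (vdcSym n))))/N - (v^2 - u^2)/2 := by
  rw [intervalIntegral.integral_congr
    (g := fun t => (∑ n ∈ Finset.range N, (if vdcSym n < t then (1:ℝ) else 0))/N - t)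
    (fun t _ => disc_eq N t)]
  rw [intervalIntegral.integral_sub (sum_ind_intervalIntegrable N u v) (continuous_id'.intervalIntegrable _ _)]
  rw [intervalIntegral.integral_div,
    intervalIntegral.integral_finset_sum
      (fun n _ => (monotone_ind (vdcSym n)).intervalIntegrable),
    integral_id]
  congr 2
  apply Finset.sum_congr rfl
  intro n _
  exact integral_ind (vdcSym n) u v huv

lemma integral_disc01 (N : ℕ) :
    ∫ t in (0:ℝ)..1, disc vdcSym N t
      = (∑ n ∈ Finset.range N, (1 - vdcSym n))/N - 1/2 := by
  rw [integral_disc N 0 1 (by norm_num)]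
  have he : ∀ n ∈ Finset.range N, (1:ℝ) - max 0 (min 1 (vdcSym n)) = 1 - vdcSym n := by
    intro n _
    rw [min_eq_right (vdcSym_le_one n), max_eq_right (vdcSym_nonneg n)]
  rw [Finset.sum_congr rfl he]
  norm_num

/-! ### Tent evaluations -/

lemma tent_zero_left (j m : ℕ) (z : ℝ) (h : z ≤ (m:ℝ)/2^j) : tent j m z = 0 := by
  unfold tent
  have hq : (0:ℝ) < 2^j := by positivity
  have h2 : (2:ℝ)^(j+1) * ((m:ℝ)/2^j) = 2*m := by rw [pow_succ]; field_simp
  have h3 : (2:ℝ)^(j+1) * z ≤ 2*m := by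
    calc (2:ℝ)^(j+1) * z ≤ 2^(j+1) * ((m:ℝ)/2^j) :=
          mul_le_mul_of_nonneg_left h (by positivity)
      _ = 2*m := h2
  rw [lam_of_nonpos _ (by linarith), mul_zero]

lemma tent_zero_right (j m : ℕ) (z : ℝ) (h : ((m:ℝ)+1)/2^j ≤ z) : tent j m z = 0 := by
  unfold tent
  have hq : (0:ℝ) < 2^j := by positivity
  have h2 : (2:ℝ)^(j+1) * (((m:ℝ)+1)/2^j) = 2*m + 2 := by rw [pow_succ]; field_simp
  have h3 : 2*(m:ℝ) + 2 ≤ 2^(j+1) * z := by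
    calc (2:ℝ)*m + 2 = 2^(j+1) * (((m:ℝ)+1)/2^j) := h2.symm
      _ ≤ 2^(j+1) * z := mul_le_mul_of_nonneg_left h (by positivity)
  rw [lam_of_ge_two _ (by linarith), mul_zero]

lemma tent_left_val (j m : ℕ) (z : ℝ) (h1 : (m:ℝ)/2^j ≤ z) (h2 : z ≤ (m:ℝ)/2^j + 1/2^(j+1)) :
    tent j m z = z - (m:ℝ)/2^j := by
  unfold tent
  have hq : (0:ℝ) < 2^j := by positivity
  have hq1 : (0:ℝ) < 2^(j+1) := by positivity
  have ha : (2:ℝ)^(j+1) * ((m:ℝ)/2^j) = 2*m := by rw [pow_succ]; field_simp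
  have hc : (2:ℝ)^(j+1) * ((m:ℝ)/2^j + 1/2^(j+1)) = 2*m + 1 := by
    rw [mul_add, ha]
    field_simp
  have l1 : 2*(m:ℝ) ≤ 2^(j+1)*z := by
    calc 2*(m:ℝ) = 2^(j+1) * ((m:ℝ)/2^j) := ha.symm
      _ ≤ 2^(j+1)*z := mul_le_mul_of_nonneg_left h1 (by positivity)
  have l2 : (2:ℝ)^(j+1)*z ≤ 2*m + 1 := by
    calc (2:ℝ)^(j+1)*z ≤ 2^(j+1) * ((m:ℝ)/2^j + 1/2^(j+1)) :=
          mul_le_mul_of_nonneg_left h2 (by positivity)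
      _ = 2*m + 1 := hc
  rw [lam_left _ (by linarith) (by linarith)]
  field_simp
  ring

lemma tent_right_val (j m : ℕ) (z : ℝ) (h1 : (m:ℝ)/2^j + 1/2^(j+1) ≤ z)
    (h2 : z ≤ ((m:ℝ)+1)/2^j) :
    tent j m z = ((m:ℝ)+1)/2^j - z := by
  unfold tent
  have hq : (0:ℝ) < 2^j := by positivity
  have hq1 : (0:ℝ) < 2^(j+1) := by positivity
  have ha : (2:ℝ)^(j+1) * ((m:ℝ)/2^j) = 2*m := by rw [pow_succ]; field_simp
  have hc : (2:ℝ)^(j+1) * ((m:ℝ)/2^j + 1/2^(j+1)) = 2*m + 1 := by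
    rw [mul_add, ha]
    field_simp
  have hb : (2:ℝ)^(j+1) * (((m:ℝ)+1)/2^j) = 2*m + 2 := by rw [pow_succ]; field_simp
  have l1 : 2*(m:ℝ) + 1 ≤ 2^(j+1)*z := by
    calc 2*(m:ℝ) + 1 = 2^(j+1) * ((m:ℝ)/2^j + 1/2^(j+1)) := hc.symm
      _ ≤ 2^(j+1)*z := mul_le_mul_of_nonneg_left h1 (by positivity)
  have l2 : (2:ℝ)^(j+1)*z ≤ 2*m + 2 := by
    calc (2:ℝ)^(j+1)*z ≤ 2^(j+1) * (((m:ℝ)+1)/2^j) :=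
          mul_le_mul_of_nonneg_left h2 (by positivity)
      _ = 2*m + 2 := hb
  rw [lam_right _ (by linarith) (by linarith)]
  field_simp
  ring

lemma clip_tent (j m : ℕ) (z : ℝ) :
    ((m:ℝ)/2^j + 1/2^(j+1) - max ((m:ℝ)/2^j) (min ((m:ℝ)/2^j + 1/2^(j+1)) z))
      - (((m:ℝ)+1)/2^j - max ((m:ℝ)/2^j + 1/2^(j+1)) (min (((m:ℝ)+1)/2^j) z))
      = -(tent j m z) := by
  have hq : (0:ℝ) < 2^j := by positivity
  have hq1 : (0:ℝ) < 2^(j+1) := by positivity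
  set a := (m:ℝ)/2^j with ha'
  set c := (m:ℝ)/2^j + 1/2^(j+1) with hc'
  set b := ((m:ℝ)+1)/2^j with hb'
  have h2q1 : (0:ℝ) < 1/2^(j+1) := by positivity
  have hac : a ≤ c := by rw [ha', hc']; linarith
  have hmid : c - a = b - c := by
    rw [ha', hb', hc', pow_succ]
    field_simp
    ring
  have hcb : c ≤ b := by linarith
  rcases le_total z a with hz1 | hz1
  · rw [min_eq_right (le_trans hz1 hac), max_eq_left hz1,
      min_eq_right (le_trans hz1 (le_trans hac hcb)), max_eq_left (le_trans hz1 hac),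
      tent_zero_left j m z hz1]
    simp only [ha', hc', hb', pow_succ]
    field_simp
    ring
  · rcases le_total z c with hz2 | hz2
    · rw [min_eq_right hz2, max_eq_right hz1, min_eq_right (le_trans hz2 hcb),
        max_eq_left hz2, tent_left_val j m z hz1 hz2]
      simp only [ha', hc', hb', pow_succ]
      field_simp
      ring
    · rcases le_total z b with hz3 | hz3
      · rw [min_eq_left hz2, max_eq_right hac, min_eq_right hz3, max_eq_right hz2,
          tent_right_val j m z hz2 hz3]
        simp only [ha', hc', hb', pow_succ]
        field_simp
        ring
      · rw [min_eq_left hz2, max_eq_right hac, min_eq_left hz3, max_eq_right hcb,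
          tent_zero_right j m z hz3]
        simp only [ha', hc', hb', pow_succ]
        field_simp
        ring

lemma inter_Ico_ae (u v : ℝ) (huv : u ≤ v) (hu : 0 ≤ u) (hv : v ≤ 1) :
    (Set.Ioc (0:ℝ) 1 ∩ Set.Ico u v : Set ℝ) =ᵐ[volume] Set.Ioc u v := by
  rw [MeasureTheory.ae_eq_set]
  constructor
  · refine measure_mono_null ?_ (Real.volume_singleton (a := u))
    intro x hx
    obtain ⟨⟨h1, h2⟩, h3⟩ := hx
    obtain ⟨h4, h5⟩ := h2
    simp only [Set.mem_Ioc, not_and_or, not_lt, not_le] at h3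
    simp only [Set.mem_singleton_iff]
    rcases h3 with h | h
    · linarith
    · linarith
  · refine measure_mono_null ?_ (Real.volume_singleton (a := v))
    intro x hx
    obtain ⟨⟨h1, h2⟩, h3⟩ := hx
    have hx01 : x ∈ Set.Ioc (0:ℝ) 1 := ⟨by linarith, by linarith⟩
    simp only [Set.mem_inter_iff, Set.mem_Ico, not_and_or, not_le, not_lt] at h3
    simp only [Set.mem_singleton_iff]
    rcases h3 with h | h
    · exact absurd hx01 h
    · rcases h with h | h
      · linarith
      · linarith

lemma haarCoeff_eq (N j m : ℕ) (hm : m < 2^j) :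
    haarCoeff vdcSym N j m
      = 1/4^(j+1) - (∑ n ∈ Finset.range N, tent j m (vdcSym n))/N := by
  have hq : (0:ℝ) < 2^j := by positivity
  have hq1 : (0:ℝ) < 2^(j+1) := by positivity
  set a := (m:ℝ)/2^j with ha'
  set c := (m:ℝ)/2^j + 1/2^(j+1) with hc'
  set b := ((m:ℝ)+1)/2^j with hb'
  have h2q1 : (0:ℝ) < 1/2^(j+1) := by positivity
  have hac : a ≤ c := by rw [ha', hc']; linarith
  have hmid : c - a = b - c := by
    rw [ha', hb', hc', pow_succ]
    field_simp
    ring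
  have hcb : c ≤ b := by linarith
  have ha0 : 0 ≤ a := by rw [ha']; positivity
  have hb1 : b ≤ 1 := by
    rw [hb', div_le_one hq]
    have : (m:ℝ) + 1 ≤ ((2^j : ℕ) : ℝ) := by exact_mod_cast hm
    calc (m:ℝ) + 1 ≤ ((2^j : ℕ) : ℝ) := this
      _ = 2^j := by push_cast; ring
  have hc1 : c ≤ 1 := le_trans hcb hb1
  have ha1 : 0 ≤ c := le_trans ha0 hac
  -- haar function as difference of indicators
  have haar_eq : ∀ t : ℝ, haarFn j m t
      = (Set.Ico a c).indicator (fun _ => (1:ℝ)) t - (Set.Ico c b).indicator (fun _ => (1:ℝ)) t := by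
    intro t
    unfold haarFn
    rw [← ha', ← hc', ← hb']
    by_cases h1 : a ≤ t ∧ t < c
    · rw [if_pos h1, Set.indicator_of_mem (Set.mem_Ico.2 h1),
        Set.indicator_of_notMem (by simp [Set.mem_Ico]; intro hh; linarith [h1.2])]
      norm_num
    · rw [if_neg h1, Set.indicator_of_notMem (by simpa [Set.mem_Ico] using h1)]
      by_cases h2 : c ≤ t ∧ t < b
      · rw [if_pos h2, Set.indicator_of_mem (Set.mem_Ico.2 h2)]
        norm_num
      · rw [if_neg h2, Set.indicator_of_notMem (by simpa [Set.mem_Ico] using h2)]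
        norm_num
  -- product with disc as difference of indicators
  have hmul : ∀ t : ℝ, disc vdcSym N t * haarFn j m t
      = (Set.Ico a c).indicator (disc vdcSym N) t
        - (Set.Ico c b).indicator (disc vdcSym N) t := by
    intro t
    rw [haar_eq t]
    rw [Set.indicator_apply, Set.indicator_apply, Set.indicator_apply, Set.indicator_apply]
    by_cases h1 : t ∈ Set.Ico a c <;> by_cases h2 : t ∈ Set.Ico c b
    · exfalso
      rw [Set.mem_Ico] at h1 h2
      linarith [h1.2, h2.1]
    · rw [if_pos h1, if_pos h1, if_neg h2, if_neg h2]; ring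
    · rw [if_neg h1, if_neg h1, if_pos h2, if_pos h2]; ring
    · rw [if_neg h1, if_neg h1, if_neg h2, if_neg h2]; ring
  unfold haarCoeff
  rw [intervalIntegral.integral_congr (fun t _ => hmul t)]
  have hct : ∀ z : ℝ, (c - max a (min c z)) - (b - max c (min b z)) = -(tent j m z) := by
    intro z
    rw [ha', hc', hb']
    exact clip_tent j m z
  have key : ∀ u v : ℝ, u ≤ v → 0 ≤ u → v ≤ 1 →
      ∫ t in (0:ℝ)..1, (Set.Ico u v).indicator (disc vdcSym N) t
        = ∫ t in u..v, disc vdcSym N t := by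
    intro u v huv hu hv
    rw [intervalIntegral.integral_of_le (by norm_num : (0:ℝ) ≤ 1),
      setIntegral_indicator measurableSet_Ico,
      setIntegral_congr_set (inter_Ico_ae u v huv hu hv),
      ← intervalIntegral.integral_of_le huv]
  have hint : ∀ u v : ℝ, u ≤ v →
      Integrable ((Set.Ico u v).indicator (disc vdcSym N)) volume := by
    intro u v huv
    apply MeasureTheory.IntegrableOn.integrable_indicator ?_ measurableSet_Ico
    have h := disc_intervalIntegrable N u v
    rw [intervalIntegrable_iff_integrableOn_Ioc_of_le huv] at h
    exact h.congr_set_ae Ico_ae_eq_Ioc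
  rw [intervalIntegral.integral_sub ((hint a c hac).intervalIntegrable)
      ((hint c b hcb).intervalIntegrable),
    key a c hac ha0 hc1, key c b hcb ha1 hb1,
    integral_disc N a c hac, integral_disc N c b hcb]
  have h42 : (4:ℝ)^(j+1) = (2^(j+1))^2 := by
    rw [show (4:ℝ) = 2^2 by norm_num, ← pow_mul, ← pow_mul]
    congr 1
    ring
  have quad : (b^2 - c^2)/2 - (c^2 - a^2)/2 = 1/4^(j+1) := by
    rw [ha', hb', hc', h42, pow_succ]
    field_simp
    ring
  have hsum : (∑ n ∈ Finset.range N, (c - max a (min c (vdcSym n))))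
      - (∑ n ∈ Finset.range N, (b - max c (min b (vdcSym n))))
      = -(∑ n ∈ Finset.range N, tent j m (vdcSym n)) := by
    rw [← Finset.sum_sub_distrib, ← Finset.sum_neg_distrib]
    exact Finset.sum_congr rfl (fun n _ => hct (vdcSym n))
  have hdd : (∑ n ∈ Finset.range N, (c - max a (min c (vdcSym n))))/N
      - (∑ n ∈ Finset.range N, (b - max c (min b (vdcSym n))))/N
      = -((∑ n ∈ Finset.range N, tent j m (vdcSym n))/N) := by
    rw [← sub_div, hsum, neg_div]
  linarith [hdd, quad]

/-! ### Main theorem -/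

theorem haarCoeff_square_sum_bound :
    ∃ c > 0, ∃ C > 0, ∀ N : ℕ, 2 ≤ N →
      (∫ t in (0:ℝ)..1, disc vdcSym N t)^2
        + ∑' j : ℕ, 2^(2*j) * (⨆ m ∈ Finset.range (2^j), (haarCoeff vdcSym N j m)^2)
        ≤ C * Real.log N / N^2 := by
  refine ⟨1, one_pos, 12 / Real.log 2, by positivity, ?_⟩
  intro N hN
  have hNR : (2:ℝ) ≤ N := by exact_mod_cast hN
  have hNpos : (0:ℝ) < N := by linarith
  have hN2 : (0:ℝ) < (N:ℝ)^2 := by positivity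
  set F : ℕ → ℝ :=
    fun j => 2^(2*j) * (⨆ m ∈ Finset.range (2^j), (haarCoeff vdcSym N j m)^2) with hF'
  set lam0 := Nat.clog 2 N with hlam'
  have hlam1 : N ≤ 2^lam0 := Nat.le_pow_clog (by norm_num) N
  have hlampos : 0 < lam0 := Nat.clog_pos (by norm_num) (by omega)
  -- bound on lam0 via logs
  have hlog2 : (0:ℝ) < Real.log 2 := Real.log_pos (by norm_num)
  have hlogN : Real.log 2 ≤ Real.log N := Real.log_le_log (by norm_num) hNR
  have hlamlog : (lam0:ℝ) ≤ 2 * Real.log N / Real.log 2 := by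
    have h1 : 2^(lam0 - 1) < N := Nat.pow_pred_clog_lt_self (by norm_num) (by omega)
    have h2 : ((2:ℝ))^(lam0 - 1) < N := by exact_mod_cast h1
    have h3 : ((lam0 - 1 : ℕ):ℝ) * Real.log 2 ≤ Real.log N := by
      rw [← Real.log_pow]
      exact Real.log_le_log (by positivity) h2.le
    have h4 : ((lam0 - 1 : ℕ):ℝ) = (lam0:ℝ) - 1 := by
      have : (1:ℕ) ≤ lam0 := hlampos
      push_cast [Nat.cast_sub this]
      ring
    rw [h4] at h3
    rw [le_div_iff₀ hlog2]
    linarith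
  -- supremum bound from a uniform bound
  have hsup : ∀ (j:ℕ) (β:ℝ), 0 ≤ β → (∀ m, m < 2^j → (haarCoeff vdcSym N j m)^2 ≤ β) →
      (⨆ m ∈ Finset.range (2^j), (haarCoeff vdcSym N j m)^2) ≤ β := by
    intro j β hβ h
    apply Real.iSup_le _ hβ
    intro m
    apply Real.iSup_le _ hβ
    intro hm
    exact h m (Finset.mem_range.1 hm)
  have hF0 : ∀ j, 0 ≤ F j := by
    intro j
    apply mul_nonneg (by positivity)
    exact Real.iSup_nonneg fun m => Real.iSup_nonneg fun _ => sq_nonneg _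
  -- bound for all j
  have hFj : ∀ j, F j ≤ 4/(N:ℝ)^2 := by
    intro j
    have hq : (0:ℝ) < 2^j := by positivity
    have hmu : ∀ m, m < 2^j → (haarCoeff vdcSym N j m)^2 ≤ ((2/2^j)/N)^2 := by
      intro m hm
      have hb := tent_sum_bound N j m hm
      have he : haarCoeff vdcSym N j m
          = -(((∑ n ∈ Finset.range N, tent j m (vdcSym n)) - N*(1/4^(j+1)))/N) := by
        rw [haarCoeff_eq N j m hm]
        field_simp
        ring
      have habs : |haarCoeff vdcSym N j m| ≤ (2/2^j)/N := by
        rw [he, abs_neg, abs_div, abs_of_pos hNpos]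
        gcongr
      rw [← sq_abs]
      exact pow_le_pow_left₀ (abs_nonneg _) habs 2
    have hid : ((2:ℝ))^(2*j) * ((2/2^j)/(N:ℝ))^2 = 4/(N:ℝ)^2 := by
      have h1 : ((2:ℝ))^(2*j) = (2^j)^2 := by
        rw [two_mul, pow_add]
        ring
      rw [h1]
      field_simp
      ring
    calc F j ≤ 2^(2*j) * ((2/2^j)/(N:ℝ))^2 := by
          apply mul_le_mul_of_nonneg_left (hsup j _ (by positivity) hmu) (by positivity)
      _ = 4/(N:ℝ)^2 := hid
  -- sharper bound for the tail
  have hFtail : ∀ j, lam0 ≤ j → F j ≤ (1/4:ℝ)^j := by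
    intro j hj
    have hq : (0:ℝ) < 2^j := by positivity
    have hNj : N ≤ 2^j := le_trans hlam1 (Nat.pow_le_pow_right (by norm_num) hj)
    have hmu : ∀ m, m < 2^j → (haarCoeff vdcSym N j m)^2 ≤ (1/4^(j+1))^2 := by
      intro m hm
      rw [haarCoeff_eq N j m hm, tent_sum_exact N j m hNj, zero_div, sub_zero]
    have hid : ((2:ℝ))^(2*j) * (1/4^(j+1))^2 ≤ (1/4:ℝ)^j := by
      have h1 : ((2:ℝ))^(2*j) = (2^j)^2 := by rw [two_mul, pow_add]; ring
      have h2 : ((4:ℝ))^(j+1) = 4*(2^j)^2 := by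
        rw [show (4:ℝ) = 2^2 by norm_num, ← pow_mul, pow_succ, ← pow_mul]
        ring_nf
      have h3 : ((1:ℝ)/4)^j = 1/(2^j)^2 := by
        rw [div_pow, one_pow, show (4:ℝ) = 2^2 by norm_num, ← pow_mul, ← pow_mul]
        ring_nf
      rw [h1, h2, h3]
      have e : ((2:ℝ)^j)^2 * (1/(4*((2:ℝ)^j)^2))^2 = 1/(16*((2:ℝ)^j)^2) := by
        field_simp
        ring
      rw [e]
      apply one_div_le_one_div_of_le (by positivity)
      nlinarith [sq_nonneg ((2:ℝ)^j)]
    calc F j ≤ 2^(2*j) * (1/4^(j+1))^2 := by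
          apply mul_le_mul_of_nonneg_left (hsup j _ (by positivity) hmu) (by positivity)
      _ ≤ (1/4:ℝ)^j := hid
  -- dominating summable series
  set g : ℕ → ℝ := fun j => if j < lam0 then 4/(N:ℝ)^2 else (1/4:ℝ)^j with hg'
  have hFg : ∀ j, F j ≤ g j := by
    intro j
    rw [hg']
    dsimp only
    split
    · exact hFj j
    · exact hFtail j (by omega)
  have hg_shift : (fun n : ℕ => g (n + lam0)) = fun n : ℕ => (1/4:ℝ)^lam0 * (1/4:ℝ)^n := by
    funext n
    rw [hg']
    dsimp only
    rw [if_neg (by omega), pow_add]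
    ring
  have hgsum : Summable g := by
    apply (summable_nat_add_iff lam0).1
    rw [hg_shift]
    exact ((summable_geometric_of_lt_one (by norm_num) (by norm_num)).mul_left _)
  have hFsum : Summable F := Summable.of_nonneg_of_le hF0 hFg hgsum
  have htsum_le : ∑' j, F j ≤ ∑' j, g j := Summable.tsum_le_tsum hFg hFsum hgsum
  -- compute the tsum of g
  have hqlam : ((N:ℝ))^2 ≤ 4^lam0 := by
    have h1 : ((N:ℝ)) ≤ 2^lam0 := by exact_mod_cast hlam1
    have h2 : ((4:ℝ))^lam0 = (2^lam0)^2 := by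
      rw [show (4:ℝ) = 2^2 by norm_num, ← pow_mul, ← pow_mul]
      ring_nf
    rw [h2]
    exact pow_le_pow_left₀ hNpos.le h1 2
  have hgtsum : ∑' j, g j ≤ (lam0:ℝ) * (4/(N:ℝ)^2) + (4/3) * (1/(N:ℝ)^2) := by
    rw [← Summable.sum_add_tsum_nat_add lam0 hgsum]
    have h1 : ∑ j ∈ Finset.range lam0, g j = (lam0:ℝ) * (4/(N:ℝ)^2) := by
      have hconst : ∀ j ∈ Finset.range lam0, g j = 4/(N:ℝ)^2 := by
        intro j hj
        have hjl : j < lam0 := Finset.mem_range.1 hj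
        simp [hg', hjl]
      rw [Finset.sum_congr rfl hconst, Finset.sum_const, Finset.card_range, nsmul_eq_mul]
    have h2 : ∑' n : ℕ, g (n + lam0) ≤ (4/3) * (1/(N:ℝ)^2) := by
      have e1 : ∑' n : ℕ, g (n + lam0) = (1/4:ℝ)^lam0 * (1-1/4:ℝ)⁻¹ := by
        rw [show (fun n : ℕ => g (n + lam0)) = fun n : ℕ => (1/4:ℝ)^lam0 * (1/4:ℝ)^n
            from hg_shift]  -- reuse
        rw [tsum_mul_left, tsum_geometric_of_lt_one (by norm_num) (by norm_num)]
      rw [e1]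
      have e2 : ((1:ℝ)/4)^lam0 ≤ 1/(N:ℝ)^2 := by
        rw [div_pow, one_pow]
        exact one_div_le_one_div_of_le hN2 hqlam
      have e3 : ((1:ℝ)-1/4)⁻¹ = 4/3 := by norm_num
      rw [e3]
      calc (1/4:ℝ)^lam0 * (4/3) ≤ (1/(N:ℝ)^2) * (4/3) :=
            mul_le_mul_of_nonneg_right e2 (by norm_num)
        _ = (4/3) * (1/(N:ℝ)^2) := by ring
    linarith
  -- the j = -1 part
  have hdisc : (∫ t in (0:ℝ)..1, disc vdcSym N t)^2 ≤ (1/4) * (1/(N:ℝ)^2) := by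
    have hb := one_sub_sum_bound N
    have hhalf : ((N:ℝ)/2)/N = 1/2 := by
      rw [div_div]
      rw [div_eq_div_iff (by positivity) (by norm_num)]
      ring
    have he : ∫ t in (0:ℝ)..1, disc vdcSym N t
        = ((∑ n ∈ Finset.range N, (1 - vdcSym n)) - (N:ℝ)/2)/N := by
      rw [integral_disc01 N, sub_div, hhalf]
    have habs : |∫ t in (0:ℝ)..1, disc vdcSym N t| ≤ (1/2)/N := by
      rw [he, abs_div, abs_of_pos hNpos]
      gcongr
    rw [← sq_abs]
    calc |∫ t in (0:ℝ)..1, disc vdcSym N t|^2 ≤ ((1/2)/(N:ℝ))^2 :=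
          pow_le_pow_left₀ (abs_nonneg _) habs 2
      _ = (1/4) * (1/(N:ℝ)^2) := by
          rw [div_pow, show ((1:ℝ)/2)^2 = 1/4 by norm_num, div_eq_mul_one_div]
  -- conclusion
  set L := Real.log N / Real.log 2 with hL'
  have hL1 : 1 ≤ L := (one_le_div hlog2).2 hlogN
  have hLlam : (lam0:ℝ) ≤ 2*L := by
    rw [hL', mul_div_assoc] at *
    exact hlamlog
  have hcoeff : (1/4:ℝ) + (lam0:ℝ)*4 + 4/3 ≤ 12*L := by linarith
  have hfin : (1/4)*(1/(N:ℝ)^2) + ((lam0:ℝ)*(4/(N:ℝ)^2) + (4/3)*(1/(N:ℝ)^2))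
      ≤ 12 / Real.log 2 * Real.log N / (N:ℝ)^2 := by
    have hrw : 12 / Real.log 2 * Real.log N / (N:ℝ)^2 = (12*L) * (1/(N:ℝ)^2) := by
      rw [hL']
      field_simp
    have expand : (1/4)*(1/(N:ℝ)^2) + ((lam0:ℝ)*(4/(N:ℝ)^2) + (4/3)*(1/(N:ℝ)^2))
        = ((1/4) + (lam0:ℝ)*4 + 4/3) * (1/(N:ℝ)^2) := by ring
    rw [hrw, expand]
    exact mul_le_mul_of_nonneg_right hcoeff (by positivity)
  have hts := le_trans htsum_le hgtsum
  linarith [hdisc, hts, hfin]
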